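/- For a closed convex set S ⊆ ℝⁿ and points x, y ∈ S, the projection of a vector v at the point x over S, defined as Π_S[x,v] = lim_{ξ→0⁺} (P_S(x+ξv) − x)/ξ where P_S is the Euclidean projection onto S, satisfies (x − y)ᵀ Π_S[x,v] ≤ (x − y)ᵀ v for all v ∈ ℝⁿ. -/

import Mathlib

/-- Projection inequality (Lemma 1): for a nonempty closed convex set `S`,
points `x, y ∈ S`, the directional projection `Π_S[x,v]` (defined as the
limit of `(P_S(x+ξv)-x)/ξ` as `ξ → 0⁺`) satisfies
`⟪x-y, Π_S[x,v]⟫ ≤ ⟪x-y, v⟫`. -/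
theorem stmt0 {n : ℕ} (S : Set (EuclideanSpace ℝ (Fin n)))
    (hS : S.Nonempty) (hclosed : IsClosed S) (hconv : Convex ℝ S)
    (P : EuclideanSpace ℝ (Fin n) → EuclideanSpace ℝ (Fin n))
    (hP : ∀ z, P z ∈ S ∧ ∀ w ∈ S, ‖z - P z‖ ≤ ‖z - w‖)
    (x y : EuclideanSpace ℝ (Fin n)) (hx : x ∈ S) (hy : y ∈ S)
    (v Pi : EuclideanSpace ℝ (Fin n))
    (hPi : Filter.Tendsto (fun ξ : ℝ => ξ⁻¹ • (P (x + ξ • v) - x))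
      (nhdsWithin 0 (Set.Ioi 0)) (nhds Pi)) :
    (inner ℝ (x - y) Pi : ℝ) ≤ (inner ℝ (x - y) v : ℝ) := by
  have hf : Filter.Tendsto (fun ξ : ℝ => (inner ℝ (x - y) (ξ⁻¹ • (P (x + ξ • v) - x)) : ℝ))
      (nhdsWithin 0 (Set.Ioi 0)) (nhds (inner ℝ (x - y) Pi : ℝ)) :=
    (Filter.Tendsto.inner tendsto_const_nhds hPi)
  have hg : Filter.Tendsto (fun ξ : ℝ => (inner ℝ (x - y) v : ℝ) + ξ * ‖v‖ ^ 2)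
      (nhdsWithin 0 (Set.Ioi 0)) (nhds ((inner ℝ (x - y) v : ℝ) + 0 * ‖v‖ ^ 2)) := by
    apply Filter.Tendsto.mono_left _ nhdsWithin_le_nhds
    exact tendsto_const_nhds.add ((Continuous.tendsto continuous_id 0).mul tendsto_const_nhds)
  rw [zero_mul, add_zero] at hg
  refine le_of_tendsto_of_tendsto hf hg ?_
  refine Filter.eventually_of_mem self_mem_nhdsWithin ?_
  intro ξ hξ
  have hξ0 : (0 : ℝ) < ξ := hξ
  set z : EuclideanSpace ℝ (Fin n) := x + ξ • v with hzdef
  set p : EuclideanSpace ℝ (Fin n) := P z with hpdef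
  obtain ⟨hpS, hmin⟩ := hP z
  -- variational inequality
  haveI : Nonempty S := hS.to_subtype
  have hinf : ‖z - p‖ = ⨅ w : S, ‖z - w‖ := by
    refine le_antisymm (le_ciInf fun w => hmin w w.2) ?_
    have hb : BddBelow (Set.range fun w : S => ‖z - (w : EuclideanSpace ℝ (Fin n))‖) := by
      refine ⟨0, ?_⟩
      rintro _ ⟨w, rfl⟩
      positivity
    exact ciInf_le hb ⟨p, hpS⟩
  have hvar : ∀ w ∈ S, (inner ℝ (z - p) (w - p) : ℝ) ≤ 0 :=
    (norm_eq_iInf_iff_real_inner_le_zero hconv hpS).mp hinf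
  have key1 : (inner ℝ (z - p) (y - p) : ℝ) ≤ 0 := hvar y hy
  have key2 : ‖z - p‖ ≤ ξ * ‖v‖ := by
    have := hmin x hx
    have hzx : ‖z - x‖ = ξ * ‖v‖ := by
      rw [hzdef]
      simp [norm_smul, abs_of_pos hξ0]
    linarith [this, hzx.symm.le]
  have key3 : (inner ℝ (z - p) v : ℝ) ≤ ‖z - p‖ * ‖v‖ := real_inner_le_norm _ _
  have hid : (inner ℝ (x - y) (p - x) : ℝ) =
      (inner ℝ (z - p) (y - p) : ℝ) - (inner ℝ (z - p) (z - p) : ℝ)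
        + ξ * (inner ℝ (z - p) v : ℝ) + ξ * (inner ℝ (x - y) v : ℝ) := by
    rw [hzdef]
    simp only [inner_sub_left, inner_sub_right, inner_add_left, inner_add_right,
      real_inner_smul_left, real_inner_smul_right]
    rw [real_inner_comm p x, real_inner_comm v x, real_inner_comm p v, real_inner_comm v y,
      real_inner_comm p y, real_inner_comm y x]
    ring
  have hnorm : (inner ℝ (z - p) (z - p) : ℝ) = ‖z - p‖ ^ 2 := real_inner_self_eq_norm_sq _
  have hA : (inner ℝ (x - y) (p - x) : ℝ) ≤ ξ * ((inner ℝ (x - y) v : ℝ) + ξ * ‖v‖ ^ 2) := by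
    have h4 : (inner ℝ (z - p) v : ℝ) ≤ ξ * ‖v‖ * ‖v‖ := by
      have hvnn : (0:ℝ) ≤ ‖v‖ := norm_nonneg _
      nlinarith [key3, key2]
    nlinarith [hid, hnorm, key1, sq_nonneg ‖z - p‖]
  have : (inner ℝ (x - y) (ξ⁻¹ • (p - x)) : ℝ) = ξ⁻¹ * (inner ℝ (x - y) (p - x) : ℝ) :=
    real_inner_smul_right _ _ _
  show (inner ℝ (x - y) (ξ⁻¹ • (p - x)) : ℝ) ≤ (inner ℝ (x - y) v : ℝ) + ξ * ‖v‖ ^ 2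
  rw [this, inv_mul_le_iff₀ hξ0]
  linarith [hA]
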